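/- Let T be an endotree with in-order sequence x. Then for each i, (i, x_i) is an ascent top of x (i.e., i = 1 or x_{i-1} < x_i) if and only if v_i ∈ treetops(T) (i.e., i = 1 or v_i has a nonempty left subtree). -/
import Mathlib


inductive LTree where
  | nil : LTree
  | node : LTree → ℕ → LTree → LTree
deriving DecidableEq

namespace LTree

def size : LTree → ℕ
  | nil => 0
  | node L _ R => L.size + 1 + R.size

/-- The in-order sequence of labels. -/
def inorder : LTree → List ℕ
  | nil => []
  | node L r R => L.inorder ++ r :: R.inorder

/-- The maximum label (0 for the empty tree). -/
def maxL : LTree → ℕ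
  | nil => 0
  | node L r R => max r (max L.maxL R.maxL)

/-- Weakly decreasing along every root-to-leaf path. -/
def Decreasing : LTree → Prop
  | nil => True
  | node L r R => L.maxL ≤ r ∧ R.maxL ≤ r ∧ L.Decreasing ∧ R.Decreasing

/-- Strictly decreasing to the left: every label in a left subtree
is strictly smaller than the label of its parent. -/
def StrictLeft : LTree → Prop
  | nil => True
  | node L r R => L.maxL < r ∧ L.StrictLeft ∧ R.StrictLeft

/-- An endotree: decreasing, strictly decreasing to the left, labels in `[n]`. -/
def IsEndotree (T : LTree) : Prop :=
  T.Decreasing ∧ T.StrictLeft ∧ ∀ l ∈ T.inorder, 1 ≤ l ∧ l ≤ T.size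

/-- A regular endotree: the set of labels equals `[k]` for some `k ≤ n`. -/
def IsRegularEndotree (T : LTree) : Prop :=
  T.IsEndotree ∧ ∃ k ≤ T.size, ∀ l, l ∈ T.inorder ↔ (1 ≤ l ∧ l ≤ k)

end LTree

/-- An endofunction on `[n]`, identified with a word of length `n` over `[n]`. -/
def IsEndofun (x : List ℕ) : Prop := ∀ a ∈ x, 1 ≤ a ∧ a ≤ x.length

/-- A Cayley permutation: an endofunction whose image is `[k]` for some `k ≤ n`. -/
def IsCayley (x : List ℕ) : Prop :=
  IsEndofun x ∧ ∃ k ≤ x.length, ∀ j, j ∈ x ↔ (1 ≤ j ∧ j ≤ k)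

namespace LTree

/-- The list of (subtrees rooted at the) nodes of `T`, in in-order. -/
def nodes : LTree → List LTree
  | nil => []
  | node L r R => L.nodes ++ node L r R :: R.nodes

/-- Root label (0 for the empty tree). -/
def rootLabel : LTree → ℕ
  | nil => 0
  | node _ r _ => r

/-- Left subtree. -/
def leftT : LTree → LTree
  | nil => nil
  | node L _ _ => L

/-- Indices `i` (0-based) such that the `i`-th in-order node `v_{i+1}` is in
`treetops(T)`: either the first node or a node with nonempty left subtree. -/
def treetopsIdx (T : LTree) : Set ℕ :=
  {i | i < T.size ∧ (i = 0 ∨ (T.nodes.getD i nil).leftT ≠ nil)}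

/-- Indices `i` such that the label of the `i`-th in-order node does not occur
at any earlier in-order node. -/
def unseenIdx (T : LTree) : Set ℕ :=
  {i | i < T.size ∧
    ∀ j < i, (T.nodes.getD j nil).rootLabel ≠ (T.nodes.getD i nil).rootLabel}

/-- A Fishburn tree: a regular endotree with `treetops(T) = unseen(T)`. -/
def IsFishburnTree (T : LTree) : Prop :=
  T.IsRegularEndotree ∧ treetopsIdx T = unseenIdx T

end LTree

/-- The set of first occurrences of `x` together with their (0-based) indices. -/
def nubPairs (x : List ℕ) : Set (ℕ × ℕ) :=
  {q | q.1 < x.length ∧ q.2 = x.getD q.1 0 ∧ ∀ j < q.1, x.getD j 0 ≠ x.getD q.1 0}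

/-- The set of ascent tops of `x` (including the first entry) together with
their (0-based) indices. -/
def asctopsPairs (x : List ℕ) : Set (ℕ × ℕ) :=
  {q | q.1 < x.length ∧ q.2 = x.getD q.1 0 ∧
    (q.1 = 0 ∨ x.getD (q.1 - 1) 0 < x.getD q.1 0)}


namespace LTree

lemma length_inorder (T : LTree) : T.inorder.length = T.size := by
  induction T with
  | nil => rfl
  | node L r R ihL ihR => simp [inorder, size, ihL, ihR]; omega

lemma length_nodes (T : LTree) : T.nodes.length = T.size := by
  induction T with
  | nil => rfl
  | node L r R ihL ihR => simp [nodes, size, ihL, ihR]; omega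

lemma size_pos (T : LTree) (h : T ≠ nil) : 0 < T.size := by
  cases T with
  | nil => simp at h
  | node L r R => simp only [size]; omega

lemma le_maxL (T : LTree) : ∀ a ∈ T.inorder, a ≤ T.maxL := by
  induction T with
  | nil => simp [inorder]
  | node L r R ihL ihR =>
    intro a ha
    simp only [inorder, List.mem_append, List.mem_cons] at ha
    simp only [maxL, le_max_iff]
    rcases ha with h | h | h
    · exact Or.inr (Or.inl (ihL a h))
    · exact Or.inl (le_of_eq h)
    · exact Or.inr (Or.inr (ihR a h))

lemma getD_mem_inorder (T : LTree) (i : ℕ) (hi : i < T.size) :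
    T.inorder.getD i 0 ∈ T.inorder := by
  rw [List.getD_eq_getElem T.inorder 0 (by rw [length_inorder]; exact hi)]
  exact List.getElem_mem _

lemma leftT_getD_zero (T : LTree) (h : T ≠ nil) : (T.nodes.getD 0 nil).leftT = nil := by
  induction T with
  | nil => simp at h
  | node L r R ihL ihR =>
    by_cases hL : L = nil
    · subst hL; simp [nodes, leftT]
    · have := size_pos L hL
      rw [nodes, List.getD_append _ _ _ _ (by rw [length_nodes]; omega)]
      exact ihL hL

lemma key (T : LTree) (hd : T.Decreasing) (hs : T.StrictLeft) (i : ℕ)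
    (h0 : 0 < i) (hi : i < T.size) :
    (T.inorder.getD (i-1) 0 < T.inorder.getD i 0) ↔ (T.nodes.getD i nil).leftT ≠ nil := by
  induction T generalizing i with
  | nil => simp [size] at hi
  | node L r R ihL ihR =>
    obtain ⟨hdL, hdR, hdL', hdR'⟩ := hd
    obtain ⟨hsL, hsL', hsR'⟩ := hs
    rw [size] at hi
    rcases lt_trichotomy i L.size with hlt | heq | hgt
    · rw [inorder, nodes,
        List.getD_append _ _ _ _ (by rw [length_inorder]; omega),
        List.getD_append _ _ _ _ (by rw [length_inorder]; omega),
        List.getD_append _ _ _ _ (by rw [length_nodes]; omega)]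
      exact ihL hdL' hsL' i h0 hlt
    · subst heq
      have hL : L ≠ nil := by intro h; subst h; simp [size] at h0
      have hLs := size_pos L hL
      rw [inorder, nodes,
        List.getD_append _ _ _ _ (by rw [length_inorder]; omega),
        List.getD_append_right _ _ _ _ (by rw [length_inorder]),
        List.getD_append_right _ _ _ _ (by rw [length_nodes])]
      simp only [length_inorder, length_nodes, Nat.sub_self, List.getD_cons_zero, leftT]
      have h1 : L.inorder.getD (L.size - 1) 0 ≤ L.maxL :=
        le_maxL L _ (getD_mem_inorder L _ (by omega))
      constructor
      · intro _; exact hL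
      · intro _; omega
    · have hR : R ≠ nil := by
        intro h; subst h; simp [size] at hi; omega
      have hRs := size_pos R hR
      set j := i - L.size - 1 with hj
      have hij : i = L.size + 1 + j := by omega
      have hjR : j < R.size := by omega
      rw [inorder, nodes,
        List.getD_append_right _ _ _ _ (by rw [length_inorder]; omega),
        List.getD_append_right _ _ _ _ (by rw [length_inorder]; omega),
        List.getD_append_right _ _ _ _ (by rw [length_nodes]; omega)]
      rw [length_inorder, length_nodes]
      have hsub : i - L.size = j + 1 := by omega
      rw [hsub, List.getD_cons_succ, List.getD_cons_succ]
      rcases Nat.eq_zero_or_pos j with hj0 | hj0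
      · have h1 : i - 1 - L.size = 0 := by omega
        rw [h1, List.getD_cons_zero, hj0]
        have h2 : R.inorder.getD 0 0 ≤ R.maxL := le_maxL R _ (getD_mem_inorder R _ hRs)
        have h3 := leftT_getD_zero R hR
        constructor
        · intro h; omega
        · intro h; exact absurd h3 h
      · have h1 : i - 1 - L.size = j - 1 + 1 := by omega
        rw [h1, List.getD_cons_succ]
        exact ihR hdR' hsR' j hj0 hjR

end LTree

/-- for an endotree `T` with in-order sequence `x`, the pair
`(i, x_i)` is an ascent top of `x` iff the `i`-th in-order node belongs to
`treetops(T)`. -/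
theorem asctop_iff_treetop (T : LTree) (h : T.IsEndotree) (i : ℕ) (hi : i < T.size) :
    (i, T.inorder.getD i 0) ∈ asctopsPairs T.inorder ↔ i ∈ T.treetopsIdx := by
  obtain ⟨hd, hs, -⟩ := h
  simp only [asctopsPairs, LTree.treetopsIdx, Set.mem_setOf_eq]
  constructor
  · rintro ⟨-, -, h2⟩
    refine ⟨hi, ?_⟩
    rcases h2 with h2 | h2
    · exact Or.inl h2
    · rcases Nat.eq_zero_or_pos i with h0 | h0
      · exact Or.inl h0
      · exact Or.inr ((LTree.key T hd hs i h0 hi).mp h2)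
  · rintro ⟨-, h2⟩
    refine ⟨by rw [LTree.length_inorder]; exact hi, by trivial, ?_⟩
    rcases h2 with h2 | h2
    · exact Or.inl h2
    · rcases Nat.eq_zero_or_pos i with h0 | h0
      · exact Or.inl h0
      · exact Or.inr ((LTree.key T hd hs i h0 hi).mpr h2)
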